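/- Let ℓ ≥ 1 and n = 2ℓ + 1. Every element g of the alternating group Alt_n has a unique presentation of the form g = t_3^{i_3} · ∏_{r=2}^{ℓ} (u_{2r}^{j_{2r}} · v_{2r}^{k_{2r}} · t_{2r+1}^{i_{2r+1}}), where the product is taken over r = 2, 3, ..., ℓ in increasing order, and the exponents are integers satisfying 0 ≤ i_3 < 3, and for every 2 ≤ r ≤ ℓ: 0 ≤ j_{2r} < 2, 0 ≤ k_{2r} < r, and 0 ≤ i_{2r+1} < 2r + 1. In other words, the ordered sequence t_3, u_4, v_4, t_5, ..., u_{2ℓ}, v_{2ℓ}, t_{2ℓ+1} forms an OGS for Alt_{2ℓ+1}. -/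
import Mathlib


/- We work in the symmetric group on `Fin n` (representing `{1, ..., n}` via `i ↦ i - 1`).
The paper multiplies permutations left-to-right: `(π₁ · π₂)(i) = π₂(π₁(i))`,
while Mathlib's `*` on `Equiv.Perm` is function composition: `(π₁ * π₂)(i) = π₁(π₂(i))`.
Hence a paper product `A · B · C` is rendered below as `C * B * A`. -/

/-- `sP n i` is the transposition `sᵢ = (i, i+1)` (1-indexed), for `1 ≤ i ≤ n - 1`. -/
def sP (n i : ℕ) : Equiv.Perm (Fin n) :=
  if h : 1 ≤ i ∧ i < n then
    Equiv.swap ⟨i - 1, lt_of_le_of_lt (Nat.sub_le i 1) h.2⟩ ⟨i, h.2⟩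
  else 1

/-- `tP n m` is `t_m = s₁ · s₂ ⋯ s_{m-1}` (paper's left-to-right product, so here the
factor for larger index is multiplied on the left).  `tP n 0 = tP n 1 = 1`. -/
def tP (n m : ℕ) : Equiv.Perm (Fin n) :=
  (List.range (m - 1)).foldl (fun g j => sP n (j + 1) * g) 1

/-- `uP n r` is `u_{2r} = t_{2r-2} · s_{2r-1}` (paper order; here reversed). -/
def uP (n r : ℕ) : Equiv.Perm (Fin n) := sP n (2 * r - 1) * tP n (2 * r - 2)

/-- `vP n r` is `v_{2r} = t_{2r}²`. -/
def vP (n r : ℕ) : Equiv.Perm (Fin n) := (tP n (2 * r)) ^ 2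

lemma sP_apply {n i : ℕ} (h1 : 1 ≤ i) (h2 : i < n) (x : Fin n) :
    ((sP n i) x).1 = if x.1 = i - 1 then i else if x.1 = i then i - 1 else x.1 := by
  unfold sP
  rw [dif_pos ⟨h1, h2⟩, Equiv.swap_apply_def]
  simp only [Fin.ext_iff]
  split_ifs <;> simp_all <;> omega

lemma tP_zero (n : ℕ) : tP n 0 = 1 := rfl
lemma tP_one (n : ℕ) : tP n 1 = 1 := rfl

lemma tP_succ (n m : ℕ) (hm : 1 ≤ m) : tP n (m + 1) = sP n m * tP n m := by
  unfold tP
  have h : (m + 1) - 1 = (m - 1) + 1 := by omega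
  rw [h, List.range_succ, List.foldl_append]
  simp only [List.foldl_cons, List.foldl_nil]
  congr 2
  omega

lemma tP_apply_ge {n m : ℕ} (x : Fin n) (hx : m ≤ x.1) : tP n m x = x := by
  induction m with
  | zero => rfl
  | succ m ih =>
    rcases Nat.eq_zero_or_pos m with h | h
    · subst h; rfl
    · rw [tP_succ n m h]
      have h1 : tP n m x = x := ih (by omega)
      have hmn : m < n := lt_of_le_of_lt (by omega) x.2
      apply Fin.ext
      rw [Equiv.Perm.mul_apply, h1, sP_apply h hmn]
      split_ifs <;> omega

lemma tP_apply_lt {n m : ℕ} (x : Fin n) (hx : x.1 < m) (hm : m ≤ n) :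
    ((tP n m) x).1 = if x.1 = 0 then m - 1 else x.1 - 1 := by
  induction m with
  | zero => omega
  | succ m ih =>
    rcases Nat.eq_zero_or_pos m with h | h
    · subst h
      interval_cases h2 : x.1 <;> simp_all [tP_one]
    · rw [tP_succ n m h]
      have hmn : m < n := by omega
      rcases Nat.lt_or_ge x.1 m with hxm | hxm
      · have h1 := ih hxm (by omega)
        rw [Equiv.Perm.mul_apply, sP_apply h hmn, h1]
        split_ifs <;> omega
      · have hxm' : x.1 = m := by omega
        rw [Equiv.Perm.mul_apply, tP_apply_ge x (by omega), sP_apply h hmn]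
        split_ifs <;> omega

lemma tP_pow_apply_ge {n m i : ℕ} (x : Fin n) (hx : m ≤ x.1) : ((tP n m) ^ i) x = x := by
  induction i with
  | zero => rfl
  | succ i ih => rw [pow_succ', Equiv.Perm.mul_apply, ih, tP_apply_ge x hx]

lemma tP_pow_apply {n m i : ℕ} (x : Fin n) (hx : x.1 < m) (hm : m ≤ n) (hi : i < m) :
    (((tP n m) ^ i) x).1 = if i ≤ x.1 then x.1 - i else x.1 + m - i := by
  induction i with
  | zero => simp
  | succ i ih =>
    have h1 := ih (by omega)
    have hy : (((tP n m) ^ i) x).1 < m := by rw [h1]; split_ifs <;> omega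
    rw [pow_succ', Equiv.Perm.mul_apply, tP_apply_lt _ hy hm, h1]
    split_ifs <;> omega

lemma uP_apply_ge {n r : ℕ} (hr : 1 ≤ r) (x : Fin n) (hx : 2 * r ≤ x.1) : uP n r x = x := by
  have h2 : 2 * r - 1 < n := by omega
  apply Fin.ext
  rw [uP, Equiv.Perm.mul_apply, tP_apply_ge x (by omega), sP_apply (by omega) h2]
  split_ifs <;> omega

lemma uP_pow_apply_ge {n r j : ℕ} (hr : 1 ≤ r) (x : Fin n) (hx : 2 * r ≤ x.1) :
    ((uP n r) ^ j) x = x := by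
  induction j with
  | zero => rfl
  | succ j ih => rw [pow_succ', Equiv.Perm.mul_apply, ih, uP_apply_ge hr x hx]

lemma vP_pow_apply_ge {n r k : ℕ} (x : Fin n) (hx : 2 * r ≤ x.1) : ((vP n r) ^ k) x = x := by
  rw [vP, ← pow_mul]
  exact tP_pow_apply_ge x hx

lemma vP_pow_apply {n r k : ℕ} (x : Fin n) (hx : x.1 < 2 * r) (hm : 2 * r ≤ n)
    (hk : k < r) (hx2 : 2 * k ≤ x.1) : (((vP n r) ^ k) x).1 = x.1 - 2 * k := by
  rw [vP, ← pow_mul, tP_pow_apply x hx hm (by omega), if_pos hx2]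

lemma block_apply_hi {n r j k i : ℕ} (hr : 2 ≤ r) (hn : 2 * r < n)
    (hi : i < 2 * r + 1) :
    ((tP n (2 * r + 1) ^ i * vP n r ^ k * uP n r ^ j) ⟨2 * r, hn⟩).1 = 2 * r - i := by
  rw [Equiv.Perm.mul_apply, Equiv.Perm.mul_apply,
    uP_pow_apply_ge (by omega) _ (by simp), vP_pow_apply_ge _ (by simp),
    tP_pow_apply _ (by simp) (by omega) hi]
  simp only [Fin.val_mk, if_pos (by omega : i ≤ 2 * r)]

lemma block_apply_lo {n r j k i : ℕ} (hr : 2 ≤ r) (hn : 2 * r < n)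
    (hj : j < 2) (hk : k < r) (hi : i < 2 * r + 1) :
    ((tP n (2 * r + 1) ^ i * vP n r ^ k * uP n r ^ j) ⟨2 * r - 1, by omega⟩).1 =
      if i ≤ 2 * r - 1 - j - 2 * k then 2 * r - 1 - j - 2 * k - i
      else 2 * r - 1 - j - 2 * k + (2 * r + 1) - i := by
  have hu : ((uP n r) ^ j) ⟨2 * r - 1, by omega⟩ = ⟨2 * r - 1 - j, by omega⟩ := by
    interval_cases j
    · apply Fin.ext; simp
    · apply Fin.ext
      rw [pow_one, uP, Equiv.Perm.mul_apply, tP_apply_ge _ (by simp only [Fin.val_mk]; omega),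
        sP_apply (by omega) (by omega)]
      simp only [Fin.val_mk]
      split_ifs <;> omega
  have hv : ((vP n r) ^ k) ⟨2 * r - 1 - j, by omega⟩ = ⟨2 * r - 1 - j - 2 * k, by omega⟩ := by
    apply Fin.ext
    rw [vP_pow_apply _ (by simp only [Fin.val_mk]; omega) (by omega) hk (by simp only [Fin.val_mk]; omega)]
  rw [Equiv.Perm.mul_apply, Equiv.Perm.mul_apply, hu, hv,
    tP_pow_apply _ (by simp only [Fin.val_mk]; omega) (by omega) hi]

lemma sP_sign {n i : ℕ} (h1 : 1 ≤ i) (h2 : i < n) : Equiv.Perm.sign (sP n i) = -1 := by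
  unfold sP
  rw [dif_pos ⟨h1, h2⟩]
  exact Equiv.Perm.sign_swap (by simp [Fin.ext_iff]; omega)

lemma tP_sign {n m : ℕ} (hm : m ≤ n) : Equiv.Perm.sign (tP n m) = (-1) ^ (m - 1) := by
  induction m with
  | zero => simp [tP_zero]
  | succ m ih =>
    rcases Nat.eq_zero_or_pos m with h | h
    · subst h; simp [tP_one]
    · rw [tP_succ n m h, map_mul, sP_sign h (by omega), ih (by omega)]
      have : m + 1 - 1 = (m - 1) + 1 := by omega
      rw [this, pow_succ]
      exact mul_comm _ _

abbrev EType (ℓ : ℕ) :=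
  Fin 3 × ((m : Fin (ℓ - 1)) → Fin 2 × Fin (m.1 + 2) × Fin (2 * (m.1 + 2) + 1))

def blk (ℓ : ℕ) (e : EType ℓ) (m : Fin (ℓ - 1)) : Equiv.Perm (Fin (2 * ℓ + 1)) :=
  tP (2 * ℓ + 1) (2 * (m.1 + 2) + 1) ^ (((e.2 m).2.2 : ℕ)) *
    vP (2 * ℓ + 1) (m.1 + 2) ^ (((e.2 m).2.1 : ℕ)) *
    uP (2 * ℓ + 1) (m.1 + 2) ^ (((e.2 m).1 : ℕ))

def psi (ℓ : ℕ) (e : EType ℓ) (m : ℕ) : Equiv.Perm (Fin (2 * ℓ + 1)) :=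
  ((List.finRange (ℓ - 1)).take m).foldl (fun acc p => blk ℓ e p * acc)
    (tP (2 * ℓ + 1) 3 ^ ((e.1 : ℕ)))

lemma blk_fix {ℓ : ℕ} (e : EType ℓ) (p : Fin (ℓ - 1)) (x : Fin (2 * ℓ + 1))
    (hx : 2 * p.1 + 5 ≤ x.1) : blk ℓ e p x = x := by
  rw [blk, Equiv.Perm.mul_apply, Equiv.Perm.mul_apply,
    uP_pow_apply_ge (by omega) _ (by omega), vP_pow_apply_ge _ (by omega),
    tP_pow_apply_ge _ (by omega)]

lemma psi_fix {ℓ : ℕ} (e : EType ℓ) (m : ℕ) (x : Fin (2 * ℓ + 1))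
    (hx : 2 * m + 3 ≤ x.1) : psi ℓ e m x = x := by
  induction m with
  | zero =>
    rw [psi, List.take_zero, List.foldl_nil, tP_pow_apply_ge _ (by omega)]
  | succ m ih =>
    rcases Nat.lt_or_ge m (ℓ - 1) with h | h
    · rw [psi, List.take_succ, List.getElem?_eq_getElem (by simpa using h)]
      simp only [List.getElem_finRange, Option.toList_some, List.foldl_append,
        List.foldl_cons, List.foldl_nil]
      rw [Equiv.Perm.mul_apply]
      have hpsi : psi ℓ e m x = x := ih (by omega)
      rw [psi] at hpsi
      rw [hpsi]
      exact blk_fix e _ x (by simp only [Fin.coe_cast, Fin.val_mk]; omega)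
    · rw [psi, List.take_of_length_le (by simp; omega)]
      rw [psi, List.take_of_length_le (by simp; omega)] at *
      exact ih (by omega)

lemma exps_inj {r j k i j' k' i' : ℕ} (hr : 2 ≤ r) (hj : j < 2) (hk : k < r)
    (hi : i < 2 * r + 1) (hj' : j' < 2) (hk' : k' < r) (hi' : i' < 2 * r + 1)
    (h1 : 2 * r - i = 2 * r - i')
    (h2 : (if i ≤ 2 * r - 1 - j - 2 * k then 2 * r - 1 - j - 2 * k - i
        else 2 * r - 1 - j - 2 * k + (2 * r + 1) - i) =
      (if i' ≤ 2 * r - 1 - j' - 2 * k' then 2 * r - 1 - j' - 2 * k' - i'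
        else 2 * r - 1 - j' - 2 * k' + (2 * r + 1) - i')) :
    j = j' ∧ k = k' ∧ i = i' := by
  split_ifs at h2 <;> omega

lemma psi_succ {ℓ : ℕ} (e : EType ℓ) (m : ℕ) (hm : m < ℓ - 1) :
    psi ℓ e (m + 1) = blk ℓ e (⟨m, hm⟩ : Fin (ℓ - 1)) * psi ℓ e m := by
  rw [psi, psi, List.take_succ, List.getElem?_eq_getElem (by simpa using hm)]
  simp only [List.getElem_finRange, Option.toList_some, List.foldl_append,
    List.foldl_cons, List.foldl_nil]
  rfl

lemma inj_aux {ℓ : ℕ} (hℓ : 1 ≤ ℓ) (m : ℕ) (hm : m ≤ ℓ - 1) (e e' : EType ℓ)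
    (heq : psi ℓ e m = psi ℓ e' m) :
    e.1 = e'.1 ∧ ∀ p : Fin (ℓ - 1), p.1 < m → e.2 p = e'.2 p := by
  induction m with
  | zero =>
    refine ⟨?_, fun p hp => absurd hp (by omega)⟩
    have h2 : (2 : ℕ) < 2 * ℓ + 1 := by omega
    have := congrArg (fun f => (f ⟨2, h2⟩ : Fin (2 * ℓ + 1)).1) heq
    simp only [psi, List.take_zero, List.foldl_nil] at this
    rw [tP_pow_apply _ (by simpa using by omega) (by omega) e.1.2,
      tP_pow_apply _ (by simpa using by omega) (by omega) e'.1.2] at this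
    have b1 := e.1.2
    have b2 := e'.1.2
    apply Fin.ext
    simp only [Fin.val_mk] at this
    split_ifs at this <;> omega
  | succ m ih =>
    have hm' : m < ℓ - 1 := by omega
    rw [psi_succ e m hm', psi_succ e' m hm'] at heq
    -- evaluate at the two top points
    set p : Fin (ℓ - 1) := ⟨m, hm'⟩ with hp
    have hr2 : 2 * (m + 2) < 2 * ℓ + 1 := by omega
    have hx2 : (⟨2 * (m + 2), hr2⟩ : Fin (2 * ℓ + 1)).1 = 2 * (m + 2) := rfl
    have key : ∀ x : Fin (2 * ℓ + 1), 2 * m + 3 ≤ x.1 →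
        blk ℓ e p x = blk ℓ e' p x := by
      intro x hx
      have := congrArg (fun f => (f x : Fin (2 * ℓ + 1))) heq
      simpa only [Equiv.Perm.mul_apply, psi_fix e m x hx, psi_fix e' m x hx] using this
    have k2 := congrArg Fin.val (key ⟨2 * (m + 2), hr2⟩ (by simp only [Fin.val_mk]; omega))
    have k1 := congrArg Fin.val (key ⟨2 * (m + 2) - 1, by omega⟩ (by simp only [Fin.val_mk]; omega))
    rw [blk, blk, block_apply_hi (by omega) hr2 (e.2 p).2.2.2,
      block_apply_hi (by omega) hr2 (e'.2 p).2.2.2] at k2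
    rw [blk, blk, block_apply_lo (by omega) hr2 (e.2 p).1.2 (e.2 p).2.1.2 (e.2 p).2.2.2,
      block_apply_lo (by omega) hr2 (e'.2 p).1.2 (e'.2 p).2.1.2 (e'.2 p).2.2.2] at k1
    obtain ⟨hj, hk, hi⟩ := exps_inj (by omega) (e.2 p).1.2 (e.2 p).2.1.2 (e.2 p).2.2.2
      (e'.2 p).1.2 (e'.2 p).2.1.2 (e'.2 p).2.2.2 k2 k1
    have hcomp : e.2 p = e'.2 p := by
      refine Prod.ext (Fin.ext hj) (Prod.ext (Fin.ext hk) (Fin.ext hi))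
    have hblk : blk ℓ e p = blk ℓ e' p := by rw [blk, blk, hcomp]
    rw [hblk] at heq
    have heq' : psi ℓ e m = psi ℓ e' m := mul_left_cancel heq
    obtain ⟨h1, h2⟩ := ih (by omega) heq'
    refine ⟨h1, fun q hq => ?_⟩
    rcases Nat.lt_or_ge q.1 m with h | h
    · exact h2 q h
    · have : q = p := Fin.ext (by simp only [hp, Fin.val_mk]; omega)
      rw [this]; exact hcomp

lemma uP_sign {n r : ℕ} (hr : 2 ≤ r) (hn : 2 * r - 1 < n) :
    Equiv.Perm.sign (uP n r) = 1 := by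
  rw [uP, map_mul, sP_sign (by omega) hn, tP_sign (by omega)]
  have h1 : 2 * r - 2 - 1 = 2 * (r - 2) + 1 := by omega
  rw [h1, Odd.neg_one_pow ⟨r - 2, by ring⟩]
  norm_num

lemma blk_sign {ℓ : ℕ} (e : EType ℓ) (p : Fin (ℓ - 1)) :
    Equiv.Perm.sign (blk ℓ e p) = 1 := by
  have hp := p.2
  have hv : Equiv.Perm.sign (vP (2 * ℓ + 1) (p.1 + 2)) = 1 := by
    rw [vP, map_pow, Int.units_sq]
  have ht : Equiv.Perm.sign (tP (2 * ℓ + 1) (2 * (p.1 + 2) + 1)) = 1 := by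
    rw [tP_sign (by omega)]
    have h1 : 2 * (p.1 + 2) + 1 - 1 = 2 * (p.1 + 2) := by omega
    rw [h1, Even.neg_one_pow ⟨p.1 + 2, by ring⟩]
  rw [blk, map_mul, map_mul, map_pow, map_pow, map_pow, ht, hv,
    uP_sign (by omega) (by omega)]
  simp

lemma foldl_sign {ℓ : ℕ} (e : EType ℓ) (l : List (Fin (ℓ - 1)))
    (acc : Equiv.Perm (Fin (2 * ℓ + 1))) (hacc : Equiv.Perm.sign acc = 1) :
    Equiv.Perm.sign (l.foldl (fun acc p => blk ℓ e p * acc) acc) = 1 := by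
  induction l generalizing acc with
  | nil => exact hacc
  | cons a l ih =>
    rw [List.foldl_cons]
    exact ih _ (by rw [map_mul, blk_sign, hacc, one_mul])

lemma psi_mem_alternating {ℓ : ℕ} (hℓ : 1 ≤ ℓ) (e : EType ℓ) :
    psi ℓ e (ℓ - 1) ∈ alternatingGroup (Fin (2 * ℓ + 1)) := by
  rw [Equiv.Perm.mem_alternatingGroup, psi]
  refine foldl_sign e _ _ ?_
  rw [map_pow, tP_sign (by omega)]
  norm_num

lemma six_prod (L : ℕ) :
    6 * ∏ m ∈ Finset.range L, (2 * ((m + 2) * (2 * (m + 2) + 1))) = (2 * L + 3).factorial := by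
  induction L with
  | zero => decide
  | succ L ih =>
    rw [Finset.prod_range_succ, show 2 * (L + 1) + 3 = (2 * L + 3) + 1 + 1 by ring,
      Nat.factorial_succ, Nat.factorial_succ, ← ih]
    ring

lemma card_eq {ℓ : ℕ} (hℓ : 1 ≤ ℓ) :
    Fintype.card (EType ℓ) = Fintype.card (alternatingGroup (Fin (2 * ℓ + 1))) := by
  haveI : Nontrivial (Fin (2 * ℓ + 1)) :=
    ⟨⟨⟨0, by omega⟩, ⟨1, by omega⟩, by simp [Fin.ext_iff]⟩⟩
  have h2 := two_mul_card_alternatingGroup (α := Fin (2 * ℓ + 1))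
  rw [Fintype.card_perm, Fintype.card_fin] at h2
  have hE : Fintype.card (EType ℓ) =
      3 * ∏ m ∈ Finset.range (ℓ - 1), (2 * ((m + 2) * (2 * (m + 2) + 1))) := by
    rw [Fintype.card_prod, Fintype.card_pi, Fintype.card_fin]
    congr 1
    rw [← Fin.prod_univ_eq_prod_range (fun m => 2 * ((m + 2) * (2 * (m + 2) + 1))) (ℓ - 1)]
    exact Finset.prod_congr rfl fun m _ => by
      rw [Fintype.card_prod, Fintype.card_fin, Fintype.card_prod, Fintype.card_fin,
        Fintype.card_fin]
  have h6 := six_prod (ℓ - 1)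
  have h3 : 2 * (ℓ - 1) + 3 = 2 * ℓ + 1 := by omega
  rw [h3] at h6
  omega

lemma psi_injective {ℓ : ℕ} (hℓ : 1 ≤ ℓ) (e e' : EType ℓ)
    (h : psi ℓ e (ℓ - 1) = psi ℓ e' (ℓ - 1)) : e = e' := by
  obtain ⟨h1, h2⟩ := inj_aux hℓ (ℓ - 1) le_rfl e e' h
  exact Prod.ext h1 (funext fun p => h2 p p.2)


/-- for `n = 2ℓ+1`, `ℓ ≥ 1`, every `g ∈ Alt_n` has a unique presentation
`g = t₃^{i₃} · ∏_{r=2}^{ℓ} (u_{2r}^{j_{2r}} · v_{2r}^{k_{2r}} · t_{2r+1}^{i_{2r+1}})`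
(paper left-to-right product over `r` increasing; rendered here in composition order,
so each new block is multiplied on the left).  The index `m : Fin (ℓ-1)` corresponds to
`r = m + 2`, with exponents `j_{2r} ∈ Fin 2`, `k_{2r} ∈ Fin r`, `i_{2r+1} ∈ Fin (2r+1)`. -/
theorem ogs_alternating_odd (ℓ : ℕ) (hℓ : 1 ≤ ℓ)
    (g : Equiv.Perm (Fin (2 * ℓ + 1))) (hg : g ∈ alternatingGroup (Fin (2 * ℓ + 1))) :
    ∃! e : Fin 3 × ((m : Fin (ℓ - 1)) → Fin 2 × Fin (m.1 + 2) × Fin (2 * (m.1 + 2) + 1)),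
      (List.finRange (ℓ - 1)).foldl
        (fun acc m =>
          tP (2 * ℓ + 1) (2 * (m.1 + 2) + 1) ^ (((e.2 m).2.2 : ℕ)) *
          vP (2 * ℓ + 1) (m.1 + 2) ^ (((e.2 m).2.1 : ℕ)) *
          uP (2 * ℓ + 1) (m.1 + 2) ^ (((e.2 m).1 : ℕ)) * acc)
        (tP (2 * ℓ + 1) 3 ^ ((e.1 : ℕ))) = g := by
  have hfold : ∀ e : EType ℓ,
      (List.finRange (ℓ - 1)).foldl
        (fun acc m =>
          tP (2 * ℓ + 1) (2 * (m.1 + 2) + 1) ^ (((e.2 m).2.2 : ℕ)) *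
          vP (2 * ℓ + 1) (m.1 + 2) ^ (((e.2 m).2.1 : ℕ)) *
          uP (2 * ℓ + 1) (m.1 + 2) ^ (((e.2 m).1 : ℕ)) * acc)
        (tP (2 * ℓ + 1) 3 ^ ((e.1 : ℕ))) = psi ℓ e (ℓ - 1) := by
    intro e
    rw [psi, List.take_of_length_le (by simp)]
    rfl
  simp only [hfold]
  have hPsi : Function.Injective
      (fun e : EType ℓ => (⟨psi ℓ e (ℓ - 1), psi_mem_alternating hℓ e⟩ :
        alternatingGroup (Fin (2 * ℓ + 1)))) := by
    intro e e' h
    exact psi_injective hℓ e e' (congrArg Subtype.val h)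
  have hsurj : Function.Surjective
      (fun e : EType ℓ => (⟨psi ℓ e (ℓ - 1), psi_mem_alternating hℓ e⟩ :
        alternatingGroup (Fin (2 * ℓ + 1)))) :=
    ((Fintype.bijective_iff_injective_and_card _).mpr ⟨hPsi, card_eq hℓ⟩).2
  obtain ⟨e, he⟩ := hsurj ⟨g, hg⟩
  refine ⟨e, congrArg Subtype.val he, fun e' h' => ?_⟩
  exact hPsi (Subtype.ext (h'.trans (congrArg Subtype.val he).symm))
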